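/- Suppose each pair of distinct elements u, w of a set T of t+1 elements has the property that for all but at most one 'interval scalar' σ in a finite set I, either u knocks out w or w knocks out u (as a symmetric relation depending on σ assigned to one of them). If t pivots are chosen uniformly at random from T with independent uniform scalars from I and |I| ≥ 4t, then the probability that the single leftover element is knocked out by none of the t pivots is at most (1/(t+1))·((|I|+1)/|I|)^t ≤ 1.5/(t+1). -/

import Mathlib

lemma tournament_sum_le_one {α : Type*} [DecidableEq α] (b : α → α → ℝ)
    (h0 : ∀ i j, 0 ≤ b i j) (h1 : ∀ i j, b i j ≤ 1)
    (hs : ∀ i j, i ≠ j → b i j + b j i ≤ 1) (S : Finset α) :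
    ∑ i ∈ S, ∏ j ∈ S.erase i, b j i ≤ 1 := by
  induction S using Finset.induction_on with
  | empty => simp
  | @insert k S' hk ih =>
    have herase : ∀ i ∈ S', (insert k S').erase i = insert k (S'.erase i) := by
      intro i hi
      rw [Finset.erase_insert_of_ne]
      rintro rfl; exact hk hi
    rw [Finset.sum_insert hk, Finset.erase_insert hk]
    have hrw : ∑ i ∈ S', ∏ j ∈ (insert k S').erase i, b j i
        = ∑ i ∈ S', b k i * ∏ j ∈ S'.erase i, b j i := by
      refine Finset.sum_congr rfl fun i hi => ?_
      rw [herase i hi, Finset.prod_insert (by simp [Finset.mem_erase, hk])]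
    rw [hrw]
    rcases S'.eq_empty_or_nonempty with rfl | hne
    · simp
    obtain ⟨m, hm, hmax⟩ := Finset.exists_max_image S' (fun i => b k i) hne
    have hQ : ∏ j ∈ S', b j k ≤ 1 - b k m := by
      have h2 : ∏ j ∈ S', b j k ≤ b m k := by
        calc ∏ j ∈ S', b j k = b m k * ∏ j ∈ S'.erase m, b j k :=
              (Finset.mul_prod_erase S' _ hm).symm
          _ ≤ b m k * 1 := by
              apply mul_le_mul_of_nonneg_left _ (h0 m k)
              exact Finset.prod_le_one (fun i _ => h0 i k) (fun i _ => h1 i k)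
          _ = b m k := mul_one _
      have hmk : m ≠ k := by rintro rfl; exact hk hm
      have := hs k m (fun h => hmk h.symm)
      linarith
    have hsum : ∑ i ∈ S', b k i * ∏ j ∈ S'.erase i, b j i ≤ b k m := by
      calc ∑ i ∈ S', b k i * ∏ j ∈ S'.erase i, b j i
          ≤ ∑ i ∈ S', b k m * ∏ j ∈ S'.erase i, b j i := by
            refine Finset.sum_le_sum fun i hi => ?_
            exact mul_le_mul_of_nonneg_right (hmax i hi)
              (Finset.prod_nonneg fun j _ => h0 j i)
        _ = b k m * ∑ i ∈ S', ∏ j ∈ S'.erase i, b j i := by rw [Finset.mul_sum]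
        _ ≤ b k m * 1 := mul_le_mul_of_nonneg_left ih (h0 k m)
        _ = b k m := mul_one _
    linarith

theorem leftover_survival_probability (t N : ℕ) (ht : 1 ≤ t) (hN : 4 * t ≤ N)
    (hNpos : 0 < N) (χ : Fin (t + 1) → Fin (t + 1) → Fin N → ℝ)
    (hχ01 : ∀ i j σ, χ i j σ = 0 ∨ χ i j σ = 1)
    (hpair : ∀ i j, i ≠ j →
      (Finset.univ.filter (fun σ => χ i j σ = 1 ∧ χ j i σ = 1)).card ≤ 1) :
    ((∑ i : Fin (t + 1), ∑ σ : Fin (t + 1) → Fin N,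
        ∏ j ∈ Finset.univ.erase i, χ j i (σ j)) /
      ((t + 1 : ℝ) * (N : ℝ) ^ (t + 1)) ≤
        (1 / (t + 1 : ℝ)) * (((N : ℝ) + 1) / N) ^ t) ∧
    ((1 / (t + 1 : ℝ)) * (((N : ℝ) + 1) / N) ^ t ≤ 1.5 / (t + 1 : ℝ)) := by
  have hNR : (0:ℝ) < N := by exact_mod_cast hNpos
  have hχ0 : ∀ i j σ, 0 ≤ χ i j σ := fun i j σ => by
    rcases hχ01 i j σ with h | h <;> simp [h]
  have hχ1 : ∀ i j σ, χ i j σ ≤ 1 := fun i j σ => by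
    rcases hχ01 i j σ with h | h <;> simp [h]
  set S : Fin (t+1) → Fin (t+1) → ℝ := fun j i => ∑ x : Fin N, χ j i x with hSdef
  have hS0 : ∀ j i, 0 ≤ S j i := fun j i =>
    Finset.sum_nonneg fun x _ => hχ0 j i x
  have hS1 : ∀ j i, S j i ≤ N := by
    intro j i
    calc S j i ≤ ∑ _x : Fin N, (1:ℝ) := Finset.sum_le_sum fun x _ => hχ1 j i x
      _ = N := by simp
  have hSpair : ∀ i j, i ≠ j → S i j + S j i ≤ (N:ℝ) + 1 := by
    intro i j hij
    have heq : S i j + S j i = ∑ x : Fin N, (χ i j x + χ j i x) := by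
      rw [Finset.sum_add_distrib]
    have hle : ∀ x : Fin N, χ i j x + χ j i x
        ≤ 1 + (if χ i j x = 1 ∧ χ j i x = 1 then (1:ℝ) else 0) := by
      intro x
      rcases hχ01 i j x with h | h <;> rcases hχ01 j i x with h' | h' <;>
        simp [h, h']
    have hcard : ((Finset.univ.filter
        (fun σ => χ i j σ = 1 ∧ χ j i σ = 1)).card : ℝ) ≤ 1 := by
      exact_mod_cast hpair i j hij
    calc S i j + S j i = ∑ x : Fin N, (χ i j x + χ j i x) := heq
      _ ≤ ∑ x : Fin N, (1 + (if χ i j x = 1 ∧ χ j i x = 1 then (1:ℝ) else 0)) :=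
          Finset.sum_le_sum fun x _ => hle x
      _ = N + ((Finset.univ.filter
            (fun σ => χ i j σ = 1 ∧ χ j i σ = 1)).card : ℝ) := by
          rw [Finset.sum_add_distrib, Finset.sum_boole]
          simp
      _ ≤ N + 1 := by linarith
  -- factorization of the inner sum
  have hfact : ∀ i : Fin (t+1),
      ∑ σ : Fin (t+1) → Fin N, ∏ j ∈ Finset.univ.erase i, χ j i (σ j)
        = N * ∏ j ∈ Finset.univ.erase i, S j i := by
    intro i
    set g : Fin (t+1) → Fin N → ℝ := fun j x => if j = i then 1 else χ j i x with hg
    have h1 : ∀ σ : Fin (t+1) → Fin N,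
        ∏ j ∈ Finset.univ.erase i, χ j i (σ j) = ∏ j : Fin (t+1), g j (σ j) := by
      intro σ
      rw [← Finset.mul_prod_erase Finset.univ (fun j => g j (σ j)) (Finset.mem_univ i)]
      simp only [hg, if_pos rfl, one_mul]
      exact Finset.prod_congr rfl fun j hj => by
        rw [if_neg (Finset.ne_of_mem_erase hj)]
    have h2 := Finset.prod_univ_sum (fun _ : Fin (t+1) => (Finset.univ : Finset (Fin N))) g
    rw [Fintype.piFinset_univ] at h2
    calc ∑ σ : Fin (t+1) → Fin N, ∏ j ∈ Finset.univ.erase i, χ j i (σ j)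
        = ∑ σ : Fin (t+1) → Fin N, ∏ j : Fin (t+1), g j (σ j) := by
          exact Finset.sum_congr rfl fun σ _ => h1 σ
      _ = ∏ j : Fin (t+1), ∑ x : Fin N, g j x := h2.symm
      _ = (∑ x : Fin N, g i x) * ∏ j ∈ Finset.univ.erase i, ∑ x : Fin N, g j x :=
          (Finset.mul_prod_erase Finset.univ (fun j => ∑ x : Fin N, g j x)
            (Finset.mem_univ i)).symm
      _ = N * ∏ j ∈ Finset.univ.erase i, S j i := by
          congr 1
          · simp [hg]
          · refine Finset.prod_congr rfl fun j hj => ?_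
            refine Finset.sum_congr rfl fun x _ => ?_
            simp [hg, Finset.ne_of_mem_erase hj]
  have hcardE : ∀ i : Fin (t+1), (Finset.univ.erase i).card = t := by
    intro i
    rw [Finset.card_erase_of_mem (Finset.mem_univ i), Finset.card_univ,
      Fintype.card_fin]
    omega
  have hc : (0:ℝ) < (N:ℝ) + 1 := by linarith
  -- tournament bound
  have hkey : ∑ i : Fin (t+1), ∏ j ∈ Finset.univ.erase i, S j i ≤ ((N:ℝ)+1)^t := by
    have hb := tournament_sum_le_one (fun j i => S j i / ((N:ℝ)+1))
      (fun i j => div_nonneg (hS0 i j) hc.le)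
      (fun i j => by
        rw [div_le_one hc]; linarith [hS1 i j])
      (fun i j hij => by
        rw [← add_div, div_le_one hc]; exact hSpair i j hij)
      (Finset.univ : Finset (Fin (t+1)))
    have hrw : ∀ i : Fin (t+1), ∏ j ∈ Finset.univ.erase i, S j i / ((N:ℝ)+1)
        = (∏ j ∈ Finset.univ.erase i, S j i) / ((N:ℝ)+1)^t := by
      intro i
      rw [Finset.prod_div_distrib, Finset.prod_const, hcardE i]
    simp only [hrw] at hb
    rw [← Finset.sum_div, div_le_one (pow_pos hc t)] at hb
    exact hb
  -- numerator bound
  have hnum : (∑ i : Fin (t + 1), ∑ σ : Fin (t + 1) → Fin N,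
      ∏ j ∈ Finset.univ.erase i, χ j i (σ j)) ≤ N * ((N:ℝ)+1)^t := by
    calc (∑ i : Fin (t + 1), ∑ σ : Fin (t + 1) → Fin N,
        ∏ j ∈ Finset.univ.erase i, χ j i (σ j))
        = ∑ i : Fin (t+1), N * ∏ j ∈ Finset.univ.erase i, S j i :=
          Finset.sum_congr rfl fun i _ => hfact i
      _ = N * ∑ i : Fin (t+1), ∏ j ∈ Finset.univ.erase i, S j i := by
          rw [Finset.mul_sum]
      _ ≤ N * ((N:ℝ)+1)^t := mul_le_mul_of_nonneg_left hkey hNR.le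
  have htR : (0:ℝ) < (t:ℝ) + 1 := by positivity
  constructor
  · have hRHS : (1 / (t + 1 : ℝ)) * (((N : ℝ) + 1) / N) ^ t
        = (N * ((N:ℝ)+1)^t) / ((t + 1 : ℝ) * (N : ℝ) ^ (t + 1)) := by
      rw [div_pow]
      field_simp
      ring
    rw [hRHS]
    apply div_le_div_of_nonneg_right hnum
    positivity
  · have hbound : (((N : ℝ) + 1) / N) ^ t ≤ 1.5 := by
      have ha : ((N:ℝ) + 1) / N = 1 + 1/N := by field_simp
      have hNt : (t:ℝ)/N ≤ 1/4 := by
        rw [div_le_div_iff₀ hNR (by norm_num)]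
        have : (4 * t : ℝ) ≤ N := by exact_mod_cast hN
        linarith
      have hN1 : (1:ℝ)/N ≤ 1 := by
        rw [div_le_one hNR]; exact_mod_cast hNpos
      have hbern : 1 - (t:ℝ)/N ≤ (1 - 1/N)^t := by
        have := one_add_mul_le_pow (a := -(1/N : ℝ)) (by linarith) t
        have heq1 : (1:ℝ) + (t:ℝ) * -(1/N) = 1 - (t:ℝ)/N := by ring
        have heq2 : (1:ℝ) + -(1/N : ℝ) = 1 - 1/N := by ring
        rw [heq1, heq2] at this
        exact this
      have hmul : (1 + 1/(N:ℝ))^t * (1 - 1/N)^t ≤ 1 := by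
        rw [← mul_pow]
        have hx : (0:ℝ) ≤ 1/N := by positivity
        apply pow_le_one₀
        · nlinarith [hN1, hx]
        · nlinarith [sq_nonneg (1/(N:ℝ))]
      have hpos : (0:ℝ) < 1 - (t:ℝ)/N := by linarith
      have hppos : (0:ℝ) ≤ (1 + 1/(N:ℝ))^t := by positivity
      have h5 : (1 + 1/(N:ℝ))^t * (1 - (t:ℝ)/N) ≤ 1 := by
        calc (1 + 1/(N:ℝ))^t * (1 - (t:ℝ)/N)
            ≤ (1 + 1/(N:ℝ))^t * (1 - 1/N)^t :=
              mul_le_mul_of_nonneg_left hbern hppos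
          _ ≤ 1 := hmul
      have h6 : (1 + 1/(N:ℝ))^t ≤ 1 / (1 - (t:ℝ)/N) := by
        rw [le_div_iff₀ hpos]; exact h5
      have h7 : 1 / (1 - (t:ℝ)/N) ≤ 4/3 := by
        rw [div_le_div_iff₀ hpos (by norm_num)]
        linarith
      rw [ha]
      calc (1 + 1/(N:ℝ))^t ≤ 1 / (1 - (t:ℝ)/N) := h6
        _ ≤ 4/3 := h7
        _ ≤ 1.5 := by norm_num
    calc (1 / (t + 1 : ℝ)) * (((N : ℝ) + 1) / N) ^ t
        ≤ (1 / (t + 1 : ℝ)) * 1.5 :=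
          mul_le_mul_of_nonneg_left hbound (by positivity)
      _ = 1.5 / (t + 1 : ℝ) := by ring
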